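/- Let M ∈ ℂ^{K×K} be Hermitian positive definite and b ∈ ℂ^K. The complex conjugate gradient method started from any x_0 terminates with the exact minimizer of f(x) = x^H M x + b^H x + x^H b (equivalently, with M x + b = 0) after at most K iterations: there exists m ≤ K with r_m = 0. -/

import Mathlib

open Matrix
open scoped ComplexOrder

theorem stmt_9 (K : ℕ) (M : Matrix (Fin K) (Fin K) ℂ) (hM : M.PosDef)
    (b x0 : Fin K → ℂ)
    (x r p : ℕ → (Fin K → ℂ)) (α β : ℕ → ℂ)
    (hx0 : x 0 = x0)
    (hr0 : r 0 = M.mulVec x0 + b)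
    (hp0 : p 0 = r 0)
    (hα : ∀ k, α k = -(star (p k) ⬝ᵥ r k) / (star (p k) ⬝ᵥ M.mulVec (p k)))
    (hx : ∀ k, x (k + 1) = x k + α k • p k)
    (hr : ∀ k, r (k + 1) = r k + α k • M.mulVec (p k))
    (hβ : ∀ k, β (k + 1) = -(star (M.mulVec (p k)) ⬝ᵥ r (k + 1)) / (star (p k) ⬝ᵥ M.mulVec (p k)))
    (hp : ∀ k, p (k + 1) = r (k + 1) + β (k + 1) • p k) :
    ∃ m ≤ K, r m = 0 := by
  by_contra hcon
  push_neg at hcon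
  have herm : ∀ u v : Fin K → ℂ, star u ⬝ᵥ M.mulVec v = star (M.mulVec u) ⬝ᵥ v := fun u v => by
    rw [star_mulVec, dotProduct_mulVec, hM.1]
  have hconj : ∀ u v : Fin K → ℂ, star (star u ⬝ᵥ v) = star v ⬝ᵥ u := fun u v => by
    rw [star_dotProduct]; simp
  have main : ∀ n, n ≤ K →
      (∀ i j, i < j → j ≤ n → star (r i) ⬝ᵥ r j = 0) ∧
      (∀ i j, i < j → j ≤ n → star (p i) ⬝ᵥ M.mulVec (p j) = 0) ∧
      (∀ i j, i < j → j ≤ n → star (p i) ⬝ᵥ r j = 0) ∧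
      (∀ k ≤ n, star (p k) ⬝ᵥ r k = star (r k) ⬝ᵥ r k) := by
    intro n
    induction n with
    | zero =>
      intro _
      refine ⟨fun i j h1 h2 => by omega, fun i j h1 h2 => by omega,
              fun i j h1 h2 => by omega, fun k hk => ?_⟩
      interval_cases k
      rw [hp0]
    | succ n ih =>
      intro hn1
      obtain ⟨A, B, C, D⟩ := ih (Nat.le_of_succ_le hn1)
      have hrnz : ∀ k ≤ n, r k ≠ 0 := fun k hk =>
        hcon k (le_trans hk (Nat.le_of_succ_le hn1))
      have hpnz : ∀ k ≤ n, p k ≠ 0 := by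
        intro k hk hzero
        have hD := D k hk
        rw [hzero] at hD
        simp only [star_zero, zero_dotProduct] at hD
        exact hrnz k hk (dotProduct_star_self_eq_zero.mp hD.symm)
      have hdenom : ∀ k ≤ n, star (p k) ⬝ᵥ M.mulVec (p k) ≠ 0 :=
        fun k hk => (hM.dotProduct_mulVec_pos (hpnz k hk)).ne'
      have hαeq : ∀ k ≤ n, α k = -(star (r k) ⬝ᵥ r k) / (star (p k) ⬝ᵥ M.mulVec (p k)) :=
        fun k hk => by rw [hα k, D k hk]
      have hαnz : ∀ k ≤ n, α k ≠ 0 := by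
        intro k hk
        rw [hαeq k hk]
        apply div_ne_zero _ (hdenom k hk)
        simp only [neg_ne_zero]
        exact fun h => hrnz k hk (dotProduct_star_self_eq_zero.mp h)
      have hrMp : ∀ k m, k ≤ m → m ≤ n →
          star (r k) ⬝ᵥ M.mulVec (p m) = star (p k) ⬝ᵥ M.mulVec (p m) := by
        intro k m hkm hmn
        cases k with
        | zero => rw [hp0]
        | succ k' =>
          have hrk : r (k' + 1) = p (k' + 1) - β (k' + 1) • p k' := by
            rw [hp k']; abel
          rw [hrk]
          have hB : star (p k') ⬝ᵥ M.mulVec (p m) = 0 := B k' m (by omega) hmn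
          simp [star_sub, sub_dotProduct, star_smul, smul_dotProduct, hB]
      have A' : ∀ i j, i < j → j ≤ n + 1 → star (r i) ⬝ᵥ r j = 0 := by
        intro i j hij hj
        rcases Nat.lt_or_ge j (n + 1) with h | h
        · exact A i j hij (by omega)
        · have hj' : j = n + 1 := by omega
          subst hj'
          have hi : i ≤ n := by omega
          rw [hr n, dotProduct_add, dotProduct_smul, smul_eq_mul]
          rcases Nat.lt_or_ge i n with hin | hin
          · rw [A i n hin le_rfl, hrMp i n hin.le le_rfl, B i n hin le_rfl]
            ring
          · have hi' : i = n := by omega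
            subst hi'
            rw [hrMp i i le_rfl hin, hαeq i hin, neg_div, neg_mul,
                div_mul_cancel₀ _ (hdenom i hin)]
            ring
      have C' : ∀ i j, i < j → j ≤ n + 1 → star (p i) ⬝ᵥ r j = 0 := by
        intro i j hij hj
        rcases Nat.lt_or_ge j (n + 1) with h | h
        · exact C i j hij (by omega)
        · have hj' : j = n + 1 := by omega
          subst hj'
          rw [hr n, dotProduct_add, dotProduct_smul, smul_eq_mul]
          rcases Nat.lt_or_ge i n with hin | hin
          · rw [C i n hin le_rfl, B i n hin le_rfl]
            ring
          · have hi' : i = n := by omega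
            subst hi'
            rw [D i hin, hαeq i hin, neg_div, neg_mul,
                div_mul_cancel₀ _ (hdenom i hin)]
            ring
      have B' : ∀ i j, i < j → j ≤ n + 1 → star (p i) ⬝ᵥ M.mulVec (p j) = 0 := by
        intro i j hij hj
        rcases Nat.lt_or_ge j (n + 1) with h | h
        · exact B i j hij (by omega)
        · have hj' : j = n + 1 := by omega
          subst hj'
          rw [hp n, mulVec_add, mulVec_smul, dotProduct_add, dotProduct_smul, smul_eq_mul]
          rcases Nat.lt_or_ge i n with hin | hin
          · have hMp : M.mulVec (p i) = (α i)⁻¹ • (r (i + 1) - r i) := by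
              rw [hr i]
              rw [add_sub_cancel_left, smul_smul, inv_mul_cancel₀ (hαnz i hin.le), one_smul]
            rw [herm (p i) (r (n + 1)), hMp, B i n hin le_rfl]
            simp [star_smul, smul_dotProduct, star_sub, sub_dotProduct,
                  A' (i + 1) (n + 1) (by omega) le_rfl, A' i (n + 1) (by omega) le_rfl]
          · have hi' : i = n := by omega
            subst hi'
            rw [herm (p i) (r (i + 1)), hβ i, neg_div, neg_mul,
                div_mul_cancel₀ _ (hdenom i hin)]
            ring
      have D' : ∀ k ≤ n + 1, star (p k) ⬝ᵥ r k = star (r k) ⬝ᵥ r k := by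
        intro k hk
        rcases Nat.lt_or_ge k (n + 1) with h | h
        · exact D k (by omega)
        · have hk' : k = n + 1 := by omega
          subst hk'
          rw [hp n]
          simp [star_add, add_dotProduct, star_smul, smul_dotProduct,
                C' n (n + 1) (by omega) le_rfl]
      exact ⟨A', B', C', D'⟩
  obtain ⟨A, -, -, -⟩ := main K le_rfl
  have horth : ∀ i j : Fin (K + 1), i ≠ j → star (r (i : ℕ)) ⬝ᵥ r (j : ℕ) = 0 := by
    intro i j hij
    rcases lt_or_gt_of_ne hij with h | h
    · exact A i j (by exact_mod_cast h) (by omega)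
    · have h0 : star (r (j : ℕ)) ⬝ᵥ r (i : ℕ) = 0 := A j i (by exact_mod_cast h) (by omega)
      have := hconj (r (j : ℕ)) (r (i : ℕ))
      rw [h0, star_zero] at this
      exact this.symm
  have hli : LinearIndependent ℂ (fun i : Fin (K + 1) => r (i : ℕ)) := by
    rw [Fintype.linearIndependent_iff]
    intro g hg i
    have h0 : star (r (i : ℕ)) ⬝ᵥ (∑ j : Fin (K + 1), g j • r (j : ℕ)) = 0 := by
      rw [hg, dotProduct_zero]
    have hsum : ∀ (v : Fin K → ℂ) (w : Fin (K + 1) → Fin K → ℂ),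
        v ⬝ᵥ (∑ j, w j) = ∑ j, v ⬝ᵥ w j := by
      intro v w
      simp only [dotProduct, Finset.sum_apply, Finset.mul_sum]
      rw [Finset.sum_comm]
    rw [hsum] at h0
    simp only [dotProduct_smul, smul_eq_mul] at h0
    rw [Finset.sum_eq_single i] at h0
    · rcases mul_eq_zero.mp h0 with h | h
      · exact h
      · exact absurd (dotProduct_star_self_eq_zero.mp h) (hcon (i : ℕ) (by omega))
    · intro j _ hji
      rw [horth i j (Ne.symm hji), mul_zero]
    · intro h
      exact absurd (Finset.mem_univ i) h
  have hcard := hli.fintype_card_le_finrank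
  simp [Module.finrank_fintype_fun_eq_card] at hcard
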